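/- For all real a, b > 0, all t ∈ ℝ and each k ∈ {0, 1, 2}, the line through the consecutive vertices P_k(t) and P_{k+1}(t) (indices mod 3) of the triangle T(t) of the homothetic Poncelet family intersects the ellipse E(a/2, b/2) in exactly one point, namely the side midpoint (P_k(t) + P_{k+1}(t))/2. Hence every T(t) is inscribed in E(a, b) and circumscribes the concentric half-sized ellipse E(a/2, b/2). -/

import Mathlib

open Real

/-- A point of the Euclidean plane `ℝ²`. -/
noncomputable def pt (x y : ℝ) : EuclideanSpace ℝ (Fin 2) := WithLp.toLp 2 ![x, y]

/-- Vertex `k` of the triangle `T(t)` of the homothetic Poncelet family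
(for `k ≥ 3` this repeats periodically, giving indices mod 3). -/
noncomputable def homP (a b t : ℝ) (k : ℕ) : EuclideanSpace ℝ (Fin 2) :=
  pt (a * Real.cos (t + 2 * π * k / 3)) (b * Real.sin (t + 2 * π * k / 3))

/-- The ellipse with semi-axes `p, q` centered at the origin. -/
def ellipse (p q : ℝ) : Set (EuclideanSpace ℝ (Fin 2)) :=
  {z | z 0 ^ 2 / p ^ 2 + z 1 ^ 2 / q ^ 2 = 1}

/-- The line through two points, as a subset of the plane. -/
noncomputable def lineThrough (A B : EuclideanSpace ℝ (Fin 2)) :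
    Set (EuclideanSpace ℝ (Fin 2)) :=
  (affineSpan ℝ {A, B} : AffineSubspace ℝ (EuclideanSpace ℝ (Fin 2)))

lemma mem_line_iff {A B z : EuclideanSpace ℝ (Fin 2)} :
    z ∈ lineThrough A B ↔ ∃ r : ℝ, AffineMap.lineMap A B r = z := by
  constructor
  · intro h
    have h2 : (z -ᵥ A) +ᵥ A ∈ line[ℝ, A, B] := by simpa [lineThrough] using h
    obtain ⟨r, hr⟩ := vadd_left_mem_affineSpan_pair.mp h2
    refine ⟨r, ?_⟩
    have : r • (B - A) = z - A := hr
    simp [AffineMap.lineMap_apply, this]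
  · rintro ⟨r, rfl⟩
    exact AffineMap.lineMap_mem_affineSpan_pair r A B

lemma lineMap_coord (A B : EuclideanSpace ℝ (Fin 2)) (r : ℝ) (i : Fin 2) :
    AffineMap.lineMap A B r i = A i + r * (B i - A i) := by
  simp [AffineMap.lineMap_apply]
  ring

lemma pt0 (x y : ℝ) : pt x y 0 = x := rfl
lemma pt1 (x y : ℝ) : pt x y 1 = y := rfl

lemma cos_2pi3 : Real.cos (2 * π / 3) = -(1/2) := by
  rw [show (2*π/3 : ℝ) = π - π/3 by ring, Real.cos_pi_sub, Real.cos_pi_div_three]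

lemma sin_2pi3 : Real.sin (2 * π / 3) = Real.sqrt 3 / 2 := by
  rw [show (2*π/3 : ℝ) = π - π/3 by ring, Real.sin_pi_sub, Real.sin_pi_div_three]

lemma quad (θ r : ℝ) :
    (Real.cos θ + r * (Real.cos (θ + 2*π/3) - Real.cos θ))^2 +
      (Real.sin θ + r * (Real.sin (θ + 2*π/3) - Real.sin θ))^2 = 1 - 3*r + 3*r^2 := by
  have hcs : Real.cos θ ^ 2 + Real.sin θ ^ 2 = 1 := Real.cos_sq_add_sin_sq θ
  have hg : Real.sqrt 3 ^ 2 = 3 := Real.sq_sqrt (by norm_num)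
  rw [Real.cos_add, Real.sin_add, cos_2pi3, sin_2pi3]
  linear_combination (1 - 3*r + (9 + Real.sqrt 3 ^ 2)/4 * r^2) * hcs + (r^2/4) * hg

/-- Key tangency lemma for a single side. -/
lemma key (a b : ℝ) (ha : 0 < a) (hb : 0 < b) (θ : ℝ) :
    lineThrough (pt (a * Real.cos θ) (b * Real.sin θ))
        (pt (a * Real.cos (θ + 2*π/3)) (b * Real.sin (θ + 2*π/3))) ∩
      ellipse (a / 2) (b / 2) =
    {midpoint ℝ (pt (a * Real.cos θ) (b * Real.sin θ))
        (pt (a * Real.cos (θ + 2*π/3)) (b * Real.sin (θ + 2*π/3)))} := by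
  set A := pt (a * Real.cos θ) (b * Real.sin θ) with hA
  set B := pt (a * Real.cos (θ + 2*π/3)) (b * Real.sin (θ + 2*π/3)) with hB
  have ha2 : (a : ℝ) ≠ 0 := ne_of_gt ha
  have hb2 : (b : ℝ) ≠ 0 := ne_of_gt hb
  have hcoord : ∀ r : ℝ, (AffineMap.lineMap A B r ∈ ellipse (a/2) (b/2) ↔ r = 1/2) := by
    intro r
    have h0 : AffineMap.lineMap A B r 0
        = a * (Real.cos θ + r * (Real.cos (θ + 2*π/3) - Real.cos θ)) := by
      rw [lineMap_coord, hA, hB, pt0, pt0]; ring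
    have h1 : AffineMap.lineMap A B r 1
        = b * (Real.sin θ + r * (Real.sin (θ + 2*π/3) - Real.sin θ)) := by
      rw [lineMap_coord, hA, hB, pt1, pt1]; ring
    set X := Real.cos θ + r * (Real.cos (θ + 2*π/3) - Real.cos θ) with hX
    set Y := Real.sin θ + r * (Real.sin (θ + 2*π/3) - Real.sin θ) with hY
    have hq : X^2 + Y^2 = 1 - 3*r + 3*r^2 := quad θ r
    have hax : (a*X)^2/(a/2)^2 = 4*X^2 := by field_simp; ring
    have hby : (b*Y)^2/(b/2)^2 = 4*Y^2 := by field_simp; ring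
    have hmem : ((AffineMap.lineMap A B) r ∈ ellipse (a/2) (b/2)) ↔ 4*X^2 + 4*Y^2 = 1 := by
      show (AffineMap.lineMap A B r 0 ^ 2 / (a/2)^2
          + AffineMap.lineMap A B r 1 ^ 2 / (b/2)^2 = 1) ↔ _
      rw [h0, h1, hax, hby]
    rw [hmem]
    constructor
    · intro h
      nlinarith [h, hq, sq_nonneg (2*r - 1)]
    · rintro rfl
      linear_combination 4*hq
  ext z
  constructor
  · rintro ⟨hz1, hz2⟩
    obtain ⟨r, hr⟩ := mem_line_iff.mp hz1
    have : r = 1/2 := (hcoord r).mp (hr ▸ hz2)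
    subst this
    rw [← hr, lineMap_one_half]
    rfl
  · rintro rfl
    refine ⟨?_, ?_⟩
    · exact mem_line_iff.mpr ⟨1/2, lineMap_one_half A B⟩
    · have := (hcoord (1/2)).mpr rfl
      rwa [lineMap_one_half] at this

/-- Every triangle of the homothetic Poncelet family is inscribed in `E(a,b)`, and
each of its sidelines meets the concentric half-sized ellipse `E(a/2, b/2)` in exactly
one point, namely the corresponding side midpoint; hence the triangle circumscribes
`E(a/2, b/2)`. -/
theorem homothetic_poncelet_inscribed_circumscribed (a b : ℝ) (ha : 0 < a) (hb : 0 < b)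
    (t : ℝ) :
    (∀ k < 3, homP a b t k ∈ ellipse a b) ∧
    (∀ k < 3, lineThrough (homP a b t k) (homP a b t (k + 1)) ∩ ellipse (a / 2) (b / 2) =
      {midpoint ℝ (homP a b t k) (homP a b t (k + 1))}) := by
  have ha2 : (a : ℝ) ≠ 0 := ne_of_gt ha
  have hb2 : (b : ℝ) ≠ 0 := ne_of_gt hb
  constructor
  · intro k _
    show (homP a b t k) 0 ^ 2 / a ^ 2 + (homP a b t k) 1 ^ 2 / b ^ 2 = 1
    rw [homP, pt0, pt1]
    set u := t + 2 * π * (k:ℝ) / 3 with hu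
    have h1 : (a * Real.cos u)^2/a^2 = Real.cos u ^ 2 := by field_simp
    have h2 : (b * Real.sin u)^2/b^2 = Real.sin u ^ 2 := by field_simp
    rw [h1, h2]
    exact Real.cos_sq_add_sin_sq u
  · intro k _
    have hstep : homP a b t (k + 1) =
        pt (a * Real.cos ((t + 2 * π * k / 3) + 2*π/3))
          (b * Real.sin ((t + 2 * π * k / 3) + 2*π/3)) := by
      rw [homP]
      congr 2 <;> · congr 1; push_cast; ring
    rw [hstep, homP]
    exact key a b ha hb (t + 2 * π * k / 3)
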